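/- Let Y, r be reals, 0 < b < 1, e > 0, f > 0, g > 0, δ > 0. Consider the balanced-budget angel-daemon game with actions {T, G} for each player and utilities: u_ang(T,T) = Y - (f/g)·b·δ, u_dae(T,T) = -(r - (e/g)·b·δ); u_ang(T,G) = Y, u_dae(T,G) = -r; u_ang(G,T) = Y + (f/g)·δ·(1-b), u_dae(G,T) = -(r + (e/g)·δ·(1-b)); u_ang(G,G) = Y + (f/g)·δ, u_dae(G,G) = -(r + (e/g)·δ). Then the profile (G, T) (the angel plays G, the daemon plays T) is the unique pure Nash equilibrium of this game. -/
import Mathlib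


/-- Actions in the balanced-budget angel-daemon game: perturb taxes T or
government spending G. -/
inductive FiscalAct : Type
  | T : FiscalAct
  | G : FiscalAct

/-- Angel's utility (perturbed income) in the balanced-budget game; the first
action is the angel's and the second the daemon's. -/
noncomputable def balancedUang (Y b f g δ : ℝ) : FiscalAct → FiscalAct → ℝ
  | FiscalAct.T, FiscalAct.T => Y - (f / g) * (b * δ)
  | FiscalAct.T, FiscalAct.G => Y
  | FiscalAct.G, FiscalAct.T => Y + (f / g) * (δ * (1 - b))
  | FiscalAct.G, FiscalAct.G => Y + (f / g) * δ

/-- Daemon's utility (minus the perturbed interest rate) in the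
balanced-budget game. -/
noncomputable def balancedUdae (r b e g δ : ℝ) : FiscalAct → FiscalAct → ℝ
  | FiscalAct.T, FiscalAct.T => -(r - (e / g) * (b * δ))
  | FiscalAct.T, FiscalAct.G => -r
  | FiscalAct.G, FiscalAct.T => -(r + (e / g) * (δ * (1 - b)))
  | FiscalAct.G, FiscalAct.G => -(r + (e / g) * δ)

/-- (a, d) is a pure Nash equilibrium. -/
def IsPNE {α β : Type*} (uang udae : α → β → ℝ) (a : α) (d : β) : Prop :=
  (∀ a' : α, uang a' d ≤ uang a d) ∧ (∀ d' : β, udae a d' ≤ udae a d)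

/-- in the balanced-budget angel-daemon game the profile (G, T)
(angel plays G, daemon plays T) is the unique pure Nash equilibrium. -/
theorem balanced_budget_unique_PNE
    (Y r b e f g δ : ℝ)
    (hb0 : 0 < b) (hb1 : b < 1) (he : 0 < e) (hf : 0 < f) (hg : 0 < g)
    (hδ : 0 < δ) :
    ∀ a d : FiscalAct,
      IsPNE (balancedUang Y b f g δ) (balancedUdae r b e g δ) a d ↔
        (a = FiscalAct.G ∧ d = FiscalAct.T) := by
  have hfg : 0 < f / g := div_pos hf hg
  have heg : 0 < e / g := div_pos he hg
  intro a d
  constructor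
  · rintro ⟨h1, h2⟩
    cases a <;> cases d <;> simp_all [IsPNE, balancedUang, balancedUdae]
    · have := h1 FiscalAct.G; simp [balancedUang] at this; nlinarith [mul_pos (mul_pos (div_pos hf hg) hδ) hb0, mul_pos (mul_pos (div_pos he hg) hδ) hb0, mul_pos (div_pos hf hg) hδ, mul_pos (div_pos he hg) hδ]
    · have := h1 FiscalAct.G; simp [balancedUang] at this; nlinarith [mul_pos (mul_pos (div_pos hf hg) hδ) hb0, mul_pos (mul_pos (div_pos he hg) hδ) hb0, mul_pos (div_pos hf hg) hδ, mul_pos (div_pos he hg) hδ]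
    · have := h2 FiscalAct.T; simp [balancedUdae] at this; nlinarith [mul_pos (mul_pos (div_pos hf hg) hδ) hb0, mul_pos (mul_pos (div_pos he hg) hδ) hb0, mul_pos (div_pos hf hg) hδ, mul_pos (div_pos he hg) hδ]
  · rintro ⟨rfl, rfl⟩
    constructor
    · intro a'; cases a' <;> simp [balancedUang] <;> nlinarith [mul_pos (mul_pos hfg hδ) hb0, mul_pos (mul_pos heg hδ) hb0, mul_pos hfg hδ, mul_pos heg hδ]
    · intro d'; cases d' <;> simp [balancedUdae] <;> nlinarith [mul_pos (mul_pos hfg hδ) hb0, mul_pos (mul_pos heg hδ) hb0, mul_pos hfg hδ, mul_pos heg hδ]
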